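/- Let Γ be a linearly ordered (additive) abelian group, I a set, and (ε_i)_{i∈I} a summable family of Hahn series in HahnSeries Γ ℝ such that supp(ε_i) ⊆ {g ∈ Γ : g > 0} for every i ∈ I. For each i ∈ I let P_i(X) = ∑_{n=1}^{∞} a_{i,n} X^n be a formal power series with real coefficients and zero constant term, and let P_i(ε_i) := ∑_{n≥1} a_{i,n} ε_i^n (this sum exists, since (a_{i,n} ε_i^n)_{n≥1} is summable by Neumann's lemma, because each ε_i has strictly positive order). Then the family (P_i(ε_i))_{i∈I} is summable. -/

import Mathlib

/-- A family of Hahn series is summable if the union of supports is partially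
well-ordered (equivalently, well-ordered, since `Γ` is linearly ordered) and each
exponent lies in the support of only finitely many members of the family. -/
def IsSummable {Γ R ι : Type*} [AddCommGroup Γ] [LinearOrder Γ] [IsOrderedAddMonoid Γ] [CommRing R]
    (f : ι → HahnSeries Γ R) : Prop :=
  (⋃ i, (f i).support).IsPWO ∧ ∀ g : Γ, {i | (f i).coeff g ≠ 0}.Finite

/-- The sum of a summable family of Hahn series. -/
noncomputable def sumOf {Γ R ι : Type*} [AddCommGroup Γ] [LinearOrder Γ] [IsOrderedAddMonoid Γ] [CommRing R]
    (f : ι → HahnSeries Γ R) (hf : IsSummable f) : HahnSeries Γ R :=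
  HahnSeries.SummableFamily.hsum ⟨f, hf.1, hf.2⟩


/-- If `(ε_i)_{i ∈ I}` is a summable family of Hahn series with real coefficients,
each with support contained in the positive part of `Γ`, and `P_i(X) = ∑_{n ≥ 1} a_{i,n} Xⁿ`
are real power series with zero constant term, then each `P_i(ε_i) = ∑_{n} a_{i,n} ε_iⁿ`
exists (the family `(a_{i,n} ε_iⁿ)ₙ` is summable) and the family `(P_i(ε_i))_{i ∈ I}`
is summable. -/
theorem power_series_family_summable {Γ I : Type*} [AddCommGroup Γ] [LinearOrder Γ] [IsOrderedAddMonoid Γ]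
    (ε : I → HahnSeries Γ ℝ) (hsum : IsSummable ε)
    (hpos : ∀ i, (ε i).support ⊆ {g : Γ | 0 < g})
    (a : I → ℕ → ℝ) (ha0 : ∀ i, a i 0 = 0) :
    ∃ h : ∀ i : I, IsSummable (fun n : ℕ => HahnSeries.C (a i n) * ε i ^ n),
      IsSummable (fun i : I =>
        sumOf (fun n : ℕ => HahnSeries.C (a i n) * ε i ^ n) (h i)) := by
  classical
  set S : Set Γ := ⋃ i, (ε i).support with hS
  have hSpwo : S.IsPWO := hsum.1
  have hSpos : ∀ g ∈ S, 0 < g := by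
    intro g hg
    obtain ⟨i, hi⟩ := Set.mem_iUnion.1 hg
    exact hpos i hi
  have hCpwo : (AddSubmonoid.closure S : Set Γ).IsPWO :=
    hSpwo.addSubmonoid_closure (fun x hx => (hSpos x hx).le)
  set D : Set Γ := (AddSubmonoid.closure S : Set Γ) ∩ {g | 0 < g} with hDdef
  have hDpwo : D.IsPWO := hCpwo.mono Set.inter_subset_left
  -- supports of positive powers lie in D
  have hpowsupp : ∀ (i : I) (n : ℕ), (ε i ^ (n + 1)).support ⊆ D := by
    intro i n
    induction n with
    | zero =>
      intro g hg
      rw [pow_one] at hg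
      exact ⟨AddSubmonoid.subset_closure (Set.mem_iUnion.2 ⟨i, hg⟩), hpos i hg⟩
    | succ m ih =>
      intro g hg
      rw [pow_succ'] at hg
      obtain ⟨s, hs, t, ht, rfl⟩ := HahnSeries.support_mul_subset hg
      have hsS : s ∈ S := Set.mem_iUnion.2 ⟨i, hs⟩
      have htD : t ∈ D := ih ht
      exact ⟨AddSubmonoid.add_mem _ (AddSubmonoid.subset_closure hsS) htD.1,
        add_pos (hSpos s hsS) htD.2⟩
  -- the key finiteness
  set F : Γ → Set I := fun g => {i | ∃ n : ℕ, (ε i ^ (n + 1)).coeff g ≠ 0} with hF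
  have key : ∀ g : Γ, (F g).Finite := by
    intro g
    by_cases hg : g ∈ D
    · refine Set.WellFoundedOn.induction (P := fun g => (F g).Finite) hDpwo.isWF hg ?_
      intro y hy IH
      have hcover : F y ⊆ {i | (ε i).coeff y ≠ 0} ∪
          ⋃ p ∈ Finset.addAntidiagonal hSpwo hDpwo y, F p.2 := by
        rintro i ⟨n, hn⟩
        cases n with
        | zero =>
          rw [pow_one] at hn
          exact Or.inl hn
        | succ m =>
          have hy' : y ∈ (ε i ^ (m + 2)).support := hn
          rw [pow_succ'] at hy'
          obtain ⟨s, hs, t, ht, rfl⟩ := HahnSeries.support_mul_subset hy'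
          have hsS : s ∈ S := Set.mem_iUnion.2 ⟨i, hs⟩
          have htD : t ∈ D := hpowsupp i m ht
          refine Or.inr (Set.mem_biUnion (x := (s, t)) ?_ ⟨m, ht⟩)
          exact Finset.mem_addAntidiagonal.2 ⟨hsS, htD, rfl⟩
      refine (Set.Finite.union (hsum.2 y) ?_).subset hcover
      refine Set.Finite.biUnion (Finset.addAntidiagonal hSpwo hDpwo y).finite_toSet ?_
      intro p hp
      obtain ⟨hp1, hp2, hp3⟩ := Finset.mem_addAntidiagonal.1 hp
      have hlt : p.2 < y := by
        have := hSpos p.1 hp1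
        calc p.2 < p.1 + p.2 := lt_add_of_pos_left _ this
        _ = y := hp3
      exact IH p.2 hp2 hlt
    · refine Set.finite_empty.subset ?_
      rintro i ⟨n, hn⟩
      exact hg (hpowsupp i n hn)
  -- positive orderTop
  have hord : ∀ i, 0 < (ε i).orderTop := by
    intro i
    by_cases h0 : ε i = 0
    · simp [h0]
    · rw [HahnSeries.zero_lt_orderTop_iff h0]
      exact hpos i (mt HahnSeries.coeff_order_eq_zero.mp h0)
  -- inner summability
  have hinner : ∀ i : I, IsSummable (fun n : ℕ => HahnSeries.C (a i n) * ε i ^ n) := by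
    intro i
    constructor
    · refine ((HahnSeries.SummableFamily.powers (ε i)).isPWO_iUnion_support).mono ?_
      refine Set.iUnion_subset fun n => Set.subset_iUnion_of_subset n ?_
      intro g hg
      rw [HahnSeries.SummableFamily.powers_of_orderTop_pos (hord i)]
      show (ε i ^ n).coeff g ≠ 0
      intro hz
      exact hg (by simp only [HahnSeries.C_mul_eq_smul, HahnSeries.coeff_smul, hz, smul_zero])
    · intro g
      refine ((HahnSeries.SummableFamily.powers (ε i)).finite_co_support g).subset ?_
      intro n hn
      rw [Function.mem_support, HahnSeries.SummableFamily.powers_of_orderTop_pos (hord i)]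
      show (ε i ^ n).coeff g ≠ 0
      intro hz
      exact hn (by simp only [HahnSeries.C_mul_eq_smul, HahnSeries.coeff_smul, hz, smul_zero])
  refine ⟨hinner, ?_, ?_⟩
  · -- union of supports of the sums is PWO
    refine hDpwo.mono ?_
    refine Set.iUnion_subset fun i => ?_
    refine (HahnSeries.SummableFamily.support_hsum_subset).trans ?_
    refine Set.iUnion_subset fun n => ?_
    show (HahnSeries.C (a i n) * ε i ^ n).support ⊆ D
    cases n with
    | zero =>
      have h0 : HahnSeries.C (a i 0) * ε i ^ 0 = 0 := by
        simp [ha0 i]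
      rw [h0, HahnSeries.support_zero]
      exact Set.empty_subset _
    | succ m =>
      intro g hg
      have hg' : (ε i ^ (m + 1)).coeff g ≠ 0 := by
        intro hz
        exact hg (by simp only [HahnSeries.C_mul_eq_smul, HahnSeries.coeff_smul, hz, smul_zero])
      exact hpowsupp i m hg'
  · -- co-support finiteness for the outer family
    intro g
    refine (key g).subset ?_
    intro i hi
    simp only [Set.mem_setOf_eq] at hi
    have hco : (sumOf (fun n : ℕ => HahnSeries.C (a i n) * ε i ^ n) (hinner i)).coeff g
        = ∑ᶠ n : ℕ, (HahnSeries.C (a i n) * ε i ^ n).coeff g := by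
      exact HahnSeries.SummableFamily.coeff_hsum
    rw [hco] at hi
    have hex : ∃ n : ℕ, (HahnSeries.C (a i n) * ε i ^ n).coeff g ≠ 0 := by
      by_contra hall
      push_neg at hall
      exact hi (by rw [finsum_congr hall, finsum_zero])
    obtain ⟨n, hn⟩ := hex
    cases n with
    | zero =>
      exfalso
      apply hn
      simp [ha0 i]
    | succ m =>
      rw [HahnSeries.C_mul_eq_smul, HahnSeries.coeff_smul] at hn
      exact ⟨m, fun hz => hn (by rw [hz, smul_zero])⟩
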